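/- Let X and Y be Hausdorff topological spaces, both path-connected, with Y simply connected, and let f : X → Y be a local homeomorphism. Then f is a homeomorphism of X onto Y if and only if f is a proper map. -/

import Mathlib

open Set Filter Topology

set_option maxHeartbeats 1000000 in
/-- The key square-lifting lemma: a proper local homeomorphism into a Hausdorff space
has the homotopy lifting property for squares, given a lift of the bottom edge. -/
theorem hc_key_lift {X Y : Type*} [TopologicalSpace X] [TopologicalSpace Y]
    [T2Space X] [T2Space Y] {f : X → Y} (hf : IsLocalHomeomorph f)
    (hp : ∀ K : Set Y, IsCompact K → IsCompact (f ⁻¹' K))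
    (H : C(unitInterval × unitInterval, Y)) (γ : unitInterval → X) (hγc : Continuous γ)
    (hγf : ∀ t, f (γ t) = H (t, 0)) :
    ∃ G : unitInterval × unitInterval → X, Continuous G ∧ (∀ t, G (t, 0) = γ t) ∧
      ∀ p, f (G p) = H p := by
  classical
  have hsep : IsSeparatedMap f := T2Space.isSeparatedMap f
  have hinj : IsLocallyInjective f := hf.isLocallyInjective
  set pr : ℝ → unitInterval := Set.projIcc 0 1 zero_le_one with hpr_def
  have hpr_cont : Continuous pr := continuous_projIcc
  set cl : ℝ → ℝ := fun t => ((pr t : ℝ)) with hcl_def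
  have hcl_cont : Continuous cl := hpr_cont.subtype_val
  have hpr_cl : ∀ t, pr (cl t) = pr t := fun t => Set.projIcc_val zero_le_one (pr t)
  have hcl_idem : ∀ t, cl (cl t) = cl t := fun t => congrArg (fun z : unitInterval => (z : ℝ)) (hpr_cl t)
  have hcl_mem : ∀ t, cl t ∈ Icc (0:ℝ) 1 := fun t => (pr t).2
  set Hr : ℝ × ℝ → Y := fun p => H (pr p.1, pr p.2) with hHr_def
  have hHrc : Continuous Hr :=
    H.continuous.comp ((hpr_cont.comp continuous_fst).prodMk (hpr_cont.comp continuous_snd))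
  have hHr_cl : ∀ t u, Hr (cl t, u) = Hr (t, u) := by
    intro t u; simp only [hHr_def, hpr_cl]
  set γ' : ℝ → X := fun t => γ (pr t) with hγ'_def
  have hγ'c : Continuous γ' := hγc.comp hpr_cont
  have hγ'_cl : ∀ t, γ' (cl t) = γ' t := fun t => congrArg γ (hpr_cl t)
  have hγ'f : ∀ t (u : ℝ), u ≤ 0 → f (γ' t) = Hr (t, u) := by
    intro t u hu
    have : pr u = 0 := by
      rw [hpr_def, Set.projIcc_of_le_left _ hu]; rfl
    rw [hHr_def]
    simp only [this]
    exact hγf (pr t)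
  -- the predicate
  set P : ℝ → Prop := fun s => ∃ G : ℝ × ℝ → X, Continuous G ∧
      (∀ p : ℝ × ℝ, G (cl p.1, p.2) = G p) ∧
      (∀ p : ℝ × ℝ, p.2 ≤ 0 → G p = γ' p.1) ∧
      (∀ p : ℝ × ℝ, p.2 ≤ s → f (G p) = Hr p) with hP_def
  have hP0 : P 0 := by
    refine ⟨fun p => γ' p.1, hγ'c.comp continuous_fst, fun p => hγ'_cl p.1,
      fun p _ => rfl, fun p hp => hγ'f p.1 p.2 hp⟩
  have hPmono : ∀ {s s' : ℝ}, s' ≤ s → P s → P s' := by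
    rintro s s' hss ⟨G, h1, h2, h3, h4⟩
    exact ⟨G, h1, h2, h3, fun p hp => h4 p (hp.trans hss)⟩
  set S : Set ℝ := {s | P s ∧ s ≤ 1} with hS_def
  have hS0 : (0:ℝ) ∈ S := ⟨hP0, zero_le_one⟩
  have hSbdd : BddAbove S := ⟨1, fun s hs => hs.2⟩
  set sstar : ℝ := sSup S with hsstar_def
  have hsstar0 : 0 ≤ sstar := le_csSup hSbdd hS0
  have hsstar1 : sstar ≤ 1 := csSup_le ⟨0, hS0⟩ fun s hs => hs.2
  -- the approximating sequence
  set sq : ℕ → ℝ := fun n => max 0 (sstar - 1 / (n + 1)) with hsq_def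
  have hsq0 : ∀ n, 0 ≤ sq n := fun n => le_max_left _ _
  have hsqle : ∀ n, sq n ≤ sstar := fun n =>
    max_le hsstar0 (sub_le_self _ (by positivity))
  have hsqmono : ∀ {n m : ℕ}, n ≤ m → sq n ≤ sq m := by
    intro n m h
    refine max_le_max le_rfl (sub_le_sub_left ?_ _)
    refine one_div_le_one_div_of_le (by positivity) ?_
    exact_mod_cast Nat.add_le_add_right h 1
  have hsqP : ∀ n, P (sq n) := by
    intro n
    rcases eq_or_lt_of_le hsstar0 with h0 | h0
    · have hzz : sq n = 0 := by
        have h1 : (0:ℝ) < 1 / ((n:ℝ) + 1) := by positivity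
        rw [hsq_def]
        simp only [← h0]
        exact max_eq_left (by linarith)
      rw [hzz]; exact hP0
    · have hlt : sq n < sstar := max_lt h0 (sub_lt_self _ (by positivity))
      obtain ⟨s', hs'S, hlt'⟩ := exists_lt_of_lt_csSup ⟨0, hS0⟩ hlt
      exact hPmono hlt'.le hs'S.1
  have hsqtend : Tendsto sq atTop (𝓝 sstar) := by
    have h1 : Tendsto (fun n : ℕ => sstar - 1 / ((n : ℝ) + 1)) atTop (𝓝 (sstar - 0)) :=
      tendsto_const_nhds.sub tendsto_one_div_add_atTop_nhds_zero_nat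
    rw [sub_zero] at h1
    have h2 := tendsto_const_nhds.max h1 (f := fun _ : ℕ => (0:ℝ))
    rwa [max_eq_right hsstar0] at h2
  choose Gs hGc hGcl hG0 hGlift using hsqP
  -- compatibility of approximate lifts
  have compat : ∀ {n m : ℕ}, n ≤ m → ∀ p : ℝ × ℝ, p.2 ≤ sq n → Gs n p = Gs m p := by
    intro n m hnm p hp
    have hD : IsPreconnected ((univ : Set ℝ) ×ˢ Iic (sq n)) :=
      (convex_univ.prod (convex_Iic _)).isPreconnected
    refine hsep.eqOn_of_comp_eqOn hinj hD (hGc n).continuousOn (hGc m).continuousOn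
      (fun q hq => ?_) (a := ((0:ℝ), (0:ℝ))) ⟨trivial, hsq0 n⟩ ?_ ⟨trivial, hp⟩
    · have hq2 : q.2 ≤ sq n := hq.2
      simp only [Function.comp_apply]
      rw [hGlift n q hq2, hGlift m q (hq2.trans (hsqmono hnm))]
    · rw [hG0 n ((0:ℝ),(0:ℝ)) le_rfl, hG0 m ((0:ℝ),(0:ℝ)) le_rfl]
  -- compact preimage
  have hKcomp : IsCompact (Set.range Hr) := by
    have : Set.range Hr = Set.range (⇑H) := by
      apply subset_antisymm
      · rintro _ ⟨p, rfl⟩; exact ⟨(pr p.1, pr p.2), rfl⟩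
      · rintro _ ⟨q, rfl⟩
        exact ⟨((q.1 : ℝ), (q.2 : ℝ)), by
          simp only [hHr_def, hpr_def, Set.projIcc_val]⟩
    rw [this]
    exact isCompact_range H.continuous
  have hE : IsCompact (f ⁻¹' Set.range Hr) := hp _ hKcomp
  -- local sections around level sstar
  have hsec : ∀ t₀ : ℝ, ∃ (δ : ℝ) (n0 : ℕ) (φ : OpenPartialHomeomorph X Y), 0 < δ ∧
      (∀ t u, |t - t₀| < δ → sstar - δ < u → u < sstar + δ → Hr (t, u) ∈ φ.target) ∧
      f = ⇑φ ∧
      (∀ m, n0 ≤ m → ∀ t u, |t - t₀| < δ → sstar - δ < u → u ≤ sq m →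
        φ.symm (Hr (t, u)) = Gs m (t, u)) := by
    intro t₀
    set xs : ℕ → X := fun n => Gs n (t₀, sq n) with hxs_def
    have hxsE : ∀ n, xs n ∈ f ⁻¹' Set.range Hr := by
      intro n
      have : f (xs n) = Hr (t₀, sq n) := hGlift n (t₀, sq n) le_rfl
      exact mem_preimage.mpr (this ▸ mem_range_self _)
    obtain ⟨e, heE, hecl⟩ := hE.exists_mapClusterPt (f := atTop) (u := xs)
      (le_principal_iff.mpr (mem_map.mpr (Eventually.of_forall hxsE)))
    have htendf : Tendsto (fun n => f (xs n)) atTop (𝓝 (Hr (t₀, sstar))) := by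
      have h1 : Tendsto (fun n => ((t₀, sq n) : ℝ × ℝ)) atTop (𝓝 (t₀, sstar)) :=
        tendsto_const_nhds.prodMk_nhds hsqtend
      have h2 := (hHrc.tendsto (t₀, sstar)).comp h1
      refine h2.congr fun n => ?_
      exact (hGlift n (t₀, sq n) le_rfl).symm
    have hfe : f e = Hr (t₀, sstar) := by
      have h2 : MapClusterPt (f e) atTop (f ∘ xs) :=
        hecl.continuousAt_comp hf.continuous.continuousAt
      have h3 : ClusterPt (f e) (𝓝 (Hr (t₀, sstar))) := h2.clusterPt.mono htendf
      exact t2_iff_nhds.mp inferInstance h3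
    obtain ⟨φ, heφ, hfφ⟩ := hf e
    have htgt : Hr (t₀, sstar) ∈ φ.target := by
      rw [← hfe, hfφ]; exact φ.map_source heφ
    obtain ⟨δ, hδ, hball⟩ := Metric.isOpen_iff.mp (φ.open_target.preimage hHrc) _ htgt
    -- pick n with `sq n` close and `xs n` in the source
    have hfreq : ∃ᶠ n in atTop, xs n ∈ φ.source :=
      mapClusterPt_iff_frequently.mp hecl _ (φ.open_source.mem_nhds heφ)
    have hev : ∀ᶠ n in atTop, sstar - δ < sq n :=
      hsqtend.eventually (eventually_gt_nhds (sub_lt_self _ hδ))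
    obtain ⟨n, hnsrc, hnclose⟩ := (hfreq.and_eventually hev).exists
    have hC1 : ∀ t u, |t - t₀| < δ → sstar - δ < u → u < sstar + δ → Hr (t, u) ∈ φ.target := by
      intro t u h1 h2 h3
      apply hball
      rw [Metric.mem_ball, Prod.dist_eq]
      refine max_lt ?_ ?_
      · rwa [Real.dist_eq]
      · rw [Real.dist_eq, abs_sub_lt_iff]
        constructor <;> linarith
    refine ⟨δ, n, φ, hδ, hC1, hfφ, ?_⟩
    intro m hnm t u h1 h2 h3
    have hO : IsPreconnected (Metric.ball t₀ δ ×ˢ Ioc (sstar - δ) (sq m)) :=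
      ((convex_ball t₀ δ).prod (convex_Ioc _ _)).isPreconnected
    have hmem : ∀ q : ℝ × ℝ, q ∈ Metric.ball t₀ δ ×ˢ Ioc (sstar - δ) (sq m) →
        Hr q ∈ φ.target := by
      rintro ⟨a, b⟩ ⟨ha, hb⟩
      refine hC1 a b (by rwa [← Real.dist_eq]) hb.1 ?_
      calc b ≤ sq m := hb.2
        _ ≤ sstar := hsqle m
        _ < sstar + δ := by linarith
    have key : EqOn (fun q : ℝ × ℝ => φ.symm (Hr q)) (Gs m)
        (Metric.ball t₀ δ ×ˢ Ioc (sstar - δ) (sq m)) := by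
      refine hsep.eqOn_of_comp_eqOn hinj hO
        (φ.continuousOn_symm.comp hHrc.continuousOn hmem)
        (hGc m).continuousOn (fun q hq => ?_)
        (a := (t₀, sq n)) (Set.mem_prod.mpr ⟨Metric.mem_ball_self hδ, hnclose, hsqmono hnm⟩) ?_
      · have h1 := hmem q hq
        simp only [Function.comp_apply]
        have : f (φ.symm (Hr q)) = Hr q := by
          rw [hfφ]; exact φ.right_inv h1
        rw [this, hGlift m q hq.2.2]
      · have hxn : f (xs n) = Hr (t₀, sq n) := hGlift n (t₀, sq n) le_rfl
        have : φ.symm (Hr (t₀, sq n)) = xs n := by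
          rw [← hxn, hfφ]; exact φ.left_inv hnsrc
        rw [this]
        exact (compat hnm (t₀, sq n) le_rfl)
    exact key (show ((t, u) : ℝ × ℝ) ∈ Metric.ball t₀ δ ×ˢ Ioc (sstar - δ) (sq m) from
      ⟨by rwa [Metric.mem_ball, Real.dist_eq], h2, h3⟩)
  choose δ n0 φ hδ hC1 hfφ hcm using hsec
  -- cross-section agreement
  have claimB : ∀ a b t u, |t - a| < δ a → |t - b| < δ b →
      sstar - min (δ a) (δ b) < u → u < sstar + min (δ a) (δ b) →
      (φ a).symm (Hr (t, u)) = (φ b).symm (Hr (t, u)) := by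
    intro a b t u hta htb hul huu
    have hminpos : 0 < min (δ a) (δ b) := lt_min (hδ a) (hδ b)
    obtain ⟨m, hm1, hm2⟩ := ((eventually_ge_atTop (max (n0 a) (n0 b))).and
      (hsqtend.eventually (eventually_gt_nhds (sub_lt_self _ hminpos)))).exists
    set O : Set (ℝ × ℝ) := (Metric.ball a (δ a) ∩ Metric.ball b (δ b)) ×ˢ
      Ioo (sstar - min (δ a) (δ b)) (sstar + min (δ a) (δ b)) with hO_def
    have hOpre : IsPreconnected O :=
      (((convex_ball a (δ a)).inter (convex_ball b (δ b))).prod (convex_Ioo _ _)).isPreconnected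
    have hmema : ∀ q ∈ O, Hr q ∈ (φ a).target := by
      rintro ⟨c, d⟩ ⟨hc, hd⟩
      refine hC1 a c d (by rw [← Real.dist_eq]; exact hc.1) ?_ ?_
      · have := hd.1; have := min_le_left (δ a) (δ b); linarith
      · have := hd.2; have := min_le_left (δ a) (δ b); linarith
    have hmemb : ∀ q ∈ O, Hr q ∈ (φ b).target := by
      rintro ⟨c, d⟩ ⟨hc, hd⟩
      refine hC1 b c d (by rw [← Real.dist_eq]; exact hc.2) ?_ ?_
      · have := hd.1; have := min_le_right (δ a) (δ b); linarith
      · have := hd.2; have := min_le_right (δ a) (δ b); linarith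
    have hbase : ((t, sq m) : ℝ × ℝ) ∈ O := by
      refine ⟨⟨?_, ?_⟩, hm2, lt_of_le_of_lt (hsqle m) (by linarith)⟩
      · rwa [Metric.mem_ball, Real.dist_eq]
      · rwa [Metric.mem_ball, Real.dist_eq]
    have key : EqOn (fun q : ℝ × ℝ => (φ a).symm (Hr q))
        (fun q : ℝ × ℝ => (φ b).symm (Hr q)) O := by
      refine hsep.eqOn_of_comp_eqOn hinj hOpre
        ((φ a).continuousOn_symm.comp hHrc.continuousOn hmema)
        ((φ b).continuousOn_symm.comp hHrc.continuousOn hmemb)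
        (fun q hq => ?_) hbase ?_
      · simp only [Function.comp_apply]
        have h1 : f ((φ a).symm (Hr q)) = Hr q := by
          rw [hfφ a]; exact (φ a).right_inv (hmema q hq)
        have h2 : f ((φ b).symm (Hr q)) = Hr q := by
          rw [hfφ b]; exact (φ b).right_inv (hmemb q hq)
        rw [h1, h2]
      · have ha' : (φ a).symm (Hr (t, sq m)) = Gs m (t, sq m) := by
          refine hcm a m (le_trans (le_max_left _ _) hm1) t (sq m) hta ?_ le_rfl
          have := min_le_left (δ a) (δ b); linarith
        have hb' : (φ b).symm (Hr (t, sq m)) = Gs m (t, sq m) := by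
          refine hcm b m (le_trans (le_max_right _ _) hm1) t (sq m) htb ?_ le_rfl
          have := min_le_right (δ a) (δ b); linarith
        rw [ha', hb']
    have : ((t, u) : ℝ × ℝ) ∈ O := by
      refine ⟨⟨?_, ?_⟩, hul, huu⟩
      · rwa [Metric.mem_ball, Real.dist_eq]
      · rwa [Metric.mem_ball, Real.dist_eq]
    exact key this
  -- finite cover of [0,1]
  obtain ⟨F, hF⟩ := isCompact_Icc.elim_finite_subcover
    (fun t₀ : ℝ => Metric.ball t₀ (δ t₀)) (fun t₀ => Metric.isOpen_ball)
    (fun t ht => mem_iUnion.mpr ⟨t, Metric.mem_ball_self (hδ t)⟩)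
  have hFne : F.Nonempty := by
    have h0 : (0:ℝ) ∈ Icc (0:ℝ) 1 := ⟨le_rfl, zero_le_one⟩
    obtain ⟨i, hi⟩ := mem_iUnion.mp (hF h0)
    obtain ⟨hiF, -⟩ := mem_iUnion.mp hi
    exact ⟨i, hiF⟩
  set δmin : ℝ := F.inf' hFne δ with hδmin_def
  have hδminpos : 0 < δmin := by
    rw [hδmin_def, Finset.lt_inf'_iff]
    exact fun i _ => hδ i
  have hδmin_le : ∀ i ∈ F, δmin ≤ δ i := fun i hi => Finset.inf'_le _ hi
  set ε : ℝ := δmin / 2 with hε_def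
  have hεpos : 0 < ε := by positivity
  have hεδ : ∀ i ∈ F, ε < δ i := fun i hi =>
    lt_of_lt_of_le (by rw [hε_def]; linarith) (hδmin_le i hi)
  -- choice of covering index
  have hσex : ∀ t : ℝ, ∃ i, i ∈ F ∧ |cl t - i| < δ i := by
    intro t
    obtain ⟨i, hi⟩ := mem_iUnion.mp (hF (hcl_mem t))
    obtain ⟨hiF, hmem⟩ := mem_iUnion.mp hi
    exact ⟨i, hiF, by rwa [Metric.mem_ball, Real.dist_eq] at hmem⟩
  choose σ0 hσ0F hσ0b using hσex
  set σ : ℝ → ℝ := fun t => σ0 (cl t) with hσ_def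
  have hσF : ∀ t, σ t ∈ F := fun t => hσ0F (cl t)
  have hσb : ∀ t, |cl t - σ t| < δ (σ t) := by
    intro t
    have := hσ0b (cl t)
    rwa [hcl_idem t] at this
  have hσcl : ∀ t, σ (cl t) = σ t := by
    intro t; rw [hσ_def]; simp only [hcl_idem]
  -- pick the base level
  obtain ⟨mstar, hmstar1, hmstar2⟩ := ((eventually_ge_atTop (F.sup n0)).and
    (hsqtend.eventually (eventually_gt_nhds (sub_lt_self _ hδminpos)))).exists
  set aa : ℝ := sq mstar with haa_def
  have haa0 : 0 ≤ aa := hsq0 mstar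
  have haaup : aa ≤ sstar := hsqle mstar
  have haalow : sstar - δmin < aa := hmstar2
  have hn0m : ∀ i ∈ F, n0 i ≤ mstar := fun i hi => le_trans (Finset.le_sup hi) hmstar1
  -- the glued lift
  set G' : ℝ × ℝ → X := fun p =>
    if p.2 ≤ aa then Gs mstar p else (φ (σ p.1)).symm (Hr (p.1, min p.2 (sstar + ε)))
    with hG'_def
  -- key description on strips
  have claimN : ∀ j ∈ F, ∀ p : ℝ × ℝ, |cl p.1 - j| < δ j → sstar - δmin < p.2 →
      G' p = (φ j).symm (Hr (p.1, min p.2 (sstar + ε))) := by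
    intro j hj p hp1 hp2
    rcases le_or_gt p.2 aa with hcase | hcase
    · have hmin : min p.2 (sstar + ε) = p.2 :=
        min_eq_left (by linarith)
      have hstep : (φ j).symm (Hr (cl p.1, p.2)) = Gs mstar (cl p.1, p.2) := by
        refine hcm j mstar (hn0m j hj) (cl p.1) p.2 hp1 ?_ hcase
        have := hδmin_le j hj; linarith
      rw [hG'_def]
      simp only [if_pos hcase, hmin]
      rw [← hHr_cl p.1 p.2, hstep]
      exact (hGcl mstar p).symm
    · have hne : ¬ p.2 ≤ aa := not_le.mpr hcase
      rw [hG'_def]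
      simp only [if_neg hne]
      set v : ℝ := min p.2 (sstar + ε) with hv_def
      have hvlow : sstar - min (δ (σ p.1)) (δ j) < v := by
        have h1 : δmin ≤ min (δ (σ p.1)) (δ j) :=
          le_min (hδmin_le _ (hσF p.1)) (hδmin_le j hj)
        have h2 : sstar - δmin < v := lt_min (by linarith) (by linarith)
        linarith
      have hvup : v < sstar + min (δ (σ p.1)) (δ j) := by
        have h1 : ε < min (δ (σ p.1)) (δ j) :=
          lt_min (hεδ _ (hσF p.1)) (hεδ j hj)
        have h2 : v ≤ sstar + ε := min_le_right _ _
        linarith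
      have := claimB (σ p.1) j (cl p.1) v (hσb p.1) hp1 hvlow hvup
      rw [← hHr_cl p.1 v, this]
  -- continuity of G'
  have hG'cont : Continuous G' := by
    rw [continuous_iff_continuousAt]
    rintro ⟨t₀, u₀⟩
    rcases lt_or_ge u₀ aa with hcase | hcase
    · have hopen : IsOpen {p : ℝ × ℝ | p.2 < aa} := isOpen_lt continuous_snd continuous_const
      have heq : EqOn G' (Gs mstar) {p : ℝ × ℝ | p.2 < aa} := by
        intro p hp
        have hple : p.2 ≤ aa := le_of_lt (show p.2 < aa from hp)
        rw [hG'_def]; simp only [if_pos hple]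
      exact (((hGc mstar).continuousOn (s := {p : ℝ × ℝ | p.2 < aa})).congr heq).continuousAt
        (hopen.mem_nhds hcase)
    · set j : ℝ := σ t₀ with hj_def
      have hjF : j ∈ F := hσF t₀
      set N : Set (ℝ × ℝ) := {p | |cl p.1 - j| < δ j ∧ sstar - δmin < p.2} with hN_def
      have hNopen : IsOpen N := by
        have h1 : IsOpen {p : ℝ × ℝ | |cl p.1 - j| < δ j} :=
          isOpen_lt (((hcl_cont.comp continuous_fst).sub continuous_const).abs) continuous_const
        have h2 : IsOpen {p : ℝ × ℝ | sstar - δmin < p.2} :=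
          isOpen_lt continuous_const continuous_snd
        exact h1.inter h2
      have hNmem : (⟨t₀, u₀⟩ : ℝ × ℝ) ∈ N := ⟨hσb t₀, by linarith⟩
      set Fj : ℝ × ℝ → X := fun p => (φ j).symm (Hr (p.1, min p.2 (sstar + ε))) with hFj_def
      have hinner : Continuous fun p : ℝ × ℝ => Hr (p.1, min p.2 (sstar + ε)) :=
        hHrc.comp (continuous_fst.prodMk (continuous_snd.min continuous_const))
      have hFjcont : ContinuousOn Fj N := by
        refine (φ j).continuousOn_symm.comp hinner.continuousOn ?_
        rintro ⟨c, d⟩ ⟨hc, hd⟩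
        have hδj : δmin ≤ δ j := hδmin_le j hjF
        have hεj : ε < δ j := hεδ j hjF
        show Hr (c, min d (sstar + ε)) ∈ (φ j).target
        rw [← hHr_cl c _]
        refine hC1 j (cl c) (min d (sstar + ε)) hc ?_ ?_
        · refine lt_min (by linarith) (by linarith)
        · have : min d (sstar + ε) ≤ sstar + ε := min_le_right _ _
          linarith
      have heq : EqOn G' Fj N := fun p hp => claimN j hjF p hp.1 hp.2
      exact (hFjcont.congr heq).continuousAt (hNopen.mem_nhds hNmem)
  -- G' witnesses P (sstar + ε)
  have hPnew : P (sstar + ε) := by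
    refine ⟨G', hG'cont, ?_, ?_, ?_⟩
    · intro p
      rw [hG'_def]
      simp only
      rcases le_or_gt p.2 aa with h | h
      · simp only [if_pos h]
        exact hGcl mstar p
      · simp only [if_neg (not_le.mpr h)]
        rw [hσcl p.1, hHr_cl p.1]
    · intro p hp
      have : p.2 ≤ aa := hp.trans haa0
      rw [hG'_def]
      simp only [if_pos this]
      exact hG0 mstar p hp
    · intro p hp
      rcases le_or_gt p.2 aa with h | h
      · rw [hG'_def]; simp only [if_pos h]
        exact hGlift mstar p h
      · rw [hG'_def]; simp only [if_neg (not_le.mpr h)]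
        have hmin : min p.2 (sstar + ε) = p.2 := min_eq_left hp
        rw [hmin]
        have hjF := hσF p.1
        have htgt : Hr (p.1, p.2) ∈ (φ (σ p.1)).target := by
          rw [← hHr_cl p.1 p.2]
          refine hC1 (σ p.1) (cl p.1) p.2 (hσb p.1) ?_ ?_
          · have := hδmin_le _ hjF; linarith
          · have := hεδ _ hjF; linarith
        rw [hfφ (σ p.1)]
        exact (φ (σ p.1)).right_inv htgt
  -- conclude sstar = 1 and P 1
  have hsstar_eq : sstar = 1 := by
    by_contra hne
    have hlt : sstar < 1 := lt_of_le_of_ne hsstar1 hne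
    have hminS : min (sstar + ε) 1 ∈ S :=
      ⟨hPmono (min_le_left _ _) hPnew, min_le_right _ _⟩
    have := le_csSup hSbdd hminS
    have h2 : sstar < min (sstar + ε) 1 := lt_min (by linarith) hlt
    rw [← hsstar_def] at this
    linarith
  have hP1 : P 1 := hPmono (by rw [← hsstar_eq]; linarith) hPnew
  obtain ⟨G, hGc', hGcl', hG0', hGl'⟩ := hP1
  refine ⟨fun q => G ((q.1 : ℝ), (q.2 : ℝ)), ?_, ?_, ?_⟩
  · exact hGc'.comp ((continuous_subtype_val.comp continuous_fst).prodMk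
      (continuous_subtype_val.comp continuous_snd))
  · intro t
    show G ((t : ℝ), ((0 : unitInterval) : ℝ)) = γ t
    have h0 : ((0 : unitInterval) : ℝ) = 0 := rfl
    rw [h0, hG0' ((t : ℝ), 0) le_rfl, hγ'_def]
    simp only [hpr_def, Set.projIcc_val]
  · intro q
    show f (G ((q.1 : ℝ), (q.2 : ℝ))) = H q
    have h1 : ((q.2 : ℝ)) ≤ 1 := q.2.2.2
    rw [hGl' ((q.1 : ℝ), (q.2 : ℝ)) h1, hHr_def]
    simp only [hpr_def, Set.projIcc_val]

/-- A continuous map is proper if the inverse image of every compact set is compact. -/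
def IsProperCompactPreimage {X Y : Type*} [TopologicalSpace X] [TopologicalSpace Y]
    (f : X → Y) : Prop :=
  Continuous f ∧ ∀ K : Set Y, IsCompact K → IsCompact (f ⁻¹' K)

/-- Hadamard–Caccioppoli theorem: a local homeomorphism between path-connected
Hausdorff spaces, with simply connected codomain, is a homeomorphism onto `Y`
if and only if it is a proper map. -/
theorem hadamard_caccioppoli {X Y : Type*} [TopologicalSpace X] [TopologicalSpace Y]
    [T2Space X] [T2Space Y] [PathConnectedSpace X] [PathConnectedSpace Y]
    [SimplyConnectedSpace Y] (f : X → Y) (hf : IsLocalHomeomorph f) :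
    IsHomeomorph f ↔ IsProperCompactPreimage f := by
  constructor
  · intro h
    obtain ⟨e, he⟩ := isHomeomorph_iff_exists_homeomorph.mp h
    refine ⟨h.continuous, fun K hK => ?_⟩
    rw [← he]
    have himg : ⇑e ⁻¹' K = ⇑e.symm '' K := by
      ext x
      constructor
      · intro hx; exact ⟨e x, hx, e.symm_apply_apply x⟩
      · rintro ⟨k, hk, rfl⟩
        show e (e.symm k) ∈ K
        rwa [e.apply_symm_apply]
    rw [himg]
    exact hK.image e.symm.continuous
  · rintro ⟨hcont, hprop⟩
    have hsep : IsSeparatedMap f := T2Space.isSeparatedMap f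
    have hinj : IsLocallyInjective f := hf.isLocallyInjective
    have hXne : Nonempty X := PathConnectedSpace.nonempty
    -- surjectivity via path lifting
    have hsurj : Function.Surjective f := by
      intro y
      obtain ⟨x₀⟩ := hXne
      have hjoin : Joined (f x₀) y := PathConnectedSpace.joined _ _
      set p : Path (f x₀) y := hjoin.somePath with hp_def
      set H : C(unitInterval × unitInterval, Y) :=
        ⟨fun q => p q.2, p.continuous.comp continuous_snd⟩ with hH_def
      obtain ⟨G, hGc, hG0, hGl⟩ := hc_key_lift hf hprop H (fun _ => x₀) continuous_const
        (fun t => by simp only [hH_def, ContinuousMap.coe_mk, Path.source])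
      exact ⟨G (0, 1), by rw [hGl (0, 1)]; exact p.target⟩
    -- injectivity via null-homotopy lifting
    have hinjf : Function.Injective f := by
      intro x₀ x₁ hxy
      have hjoin : Joined x₀ x₁ := PathConnectedSpace.joined _ _
      set q : Path x₀ x₁ := hjoin.somePath with hq_def
      set ℓ : Path (f x₀) (f x₁) := q.map hcont with hl_def
      set ℓ' : Path (f x₀) (f x₀) := ℓ.cast rfl hxy with hl'_def
      have hhom : ℓ'.Homotopic (Path.refl (f x₀)) :=
        SimplyConnectedSpace.paths_homotopic _ _
      obtain ⟨F⟩ := hhom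
      set H : C(unitInterval × unitInterval, Y) :=
        ⟨fun r => F (r.2, r.1), F.continuous.comp (continuous_snd.prodMk continuous_fst)⟩
        with hH_def
      have hγf : ∀ t, f (q t) = H (t, 0) := by
        intro t
        show f (q t) = F (0, t)
        rw [F.apply_zero]
        show f (q t) = ℓ' t
        rw [hl'_def, Path.cast_coe, hl_def, Path.map_coe]
        rfl
      obtain ⟨G, hGc, hG0, hGl⟩ := hc_key_lift hf hprop H q q.continuous hγf
      have hconst : ∀ (g : unitInterval → X), Continuous g →
          (∀ u u', f (g u) = f (g u')) → ∀ u u', g u = g u' :=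
        fun g hg he u u' => hsep.const_of_comp hinj hg he u u'
      have hA : G (0, 1) = x₀ := by
        have h1 : ∀ u u', f (G (0, u)) = f (G (0, u')) := by
          intro u u'
          rw [hGl (0, u), hGl (0, u')]
          show F (u, 0) = F (u', 0)
          rw [F.source, F.source]
        have := hconst (fun u => G (0, u)) (hGc.comp (continuous_const.prodMk continuous_id))
          h1 1 0
        rw [this, hG0 0, hq_def]
        exact q.source
      have hB : G (1, 1) = x₁ := by
        have h1 : ∀ u u', f (G (1, u)) = f (G (1, u')) := by
          intro u u'
          rw [hGl (1, u), hGl (1, u')]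
          show F (u, 1) = F (u', 1)
          rw [F.target, F.target]
        have := hconst (fun u => G (1, u)) (hGc.comp (continuous_const.prodMk continuous_id))
          h1 1 0
        rw [this, hG0 1, hq_def]
        exact q.target
      have hC : G (0, 1) = G (1, 1) := by
        have h1 : ∀ t t', f (G (t, 1)) = f (G (t', 1)) := by
          intro t t'
          rw [hGl (t, 1), hGl (t', 1)]
          show F (1, t) = F (1, t')
          rw [F.apply_one, F.apply_one]
          rfl
        exact hconst (fun t => G (t, 1)) (hGc.comp (continuous_id.prodMk continuous_const))
          h1 0 1
      rw [← hA, hC, hB]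
    have hopen : IsOpenMap f := hf.isOpenMap
    rw [isHomeomorph_iff_isEmbedding_surjective]
    refine ⟨?_, hsurj⟩
    exact (isOpenEmbedding_iff_continuous_injective_isOpenMap.mpr ⟨hcont, hinjf, hopen⟩).isEmbedding
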